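/- Let Y = G + iB be an n×n complex matrix, where G and B are real n×n matrices, G is symmetric positive definite, and B is symmetric. Then the imaginary part of Y⁻¹ satisfies Im[Y⁻¹] = −(G + B·G⁻¹·B)⁻¹ · B · G⁻¹. -/

import Mathlib

open Matrix

/-- Formula `X = −R·B·G⁻¹` from the proof of Lemma 1:
`Im[Y⁻¹] = −(G + B G⁻¹ B)⁻¹ B G⁻¹`. -/
theorem complex_matrix_inv_im_formula {n : ℕ}
    (G B : Matrix (Fin n) (Fin n) ℝ) (Y : Matrix (Fin n) (Fin n) ℂ)
    (hRe : ∀ i j, (Y i j).re = G i j) (hIm : ∀ i j, (Y i j).im = B i j)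
    (hGsym : G = Gᵀ)
    (hGpd : ∀ x : Fin n → ℝ, x ≠ 0 → 0 < x ⬝ᵥ (G *ᵥ x))
    (hBsym : B = Bᵀ) :
    Y⁻¹.map Complex.im = -((G + B * G⁻¹ * B)⁻¹ * B * G⁻¹) := by
  have hGherm : G.IsHermitian := by
    ext i j
    rw [Matrix.conjTranspose_apply, star_trivial]
    exact (congrFun (congrFun hGsym i) j).symm
  have hBH : Bᴴ = B := by
    ext i j
    rw [Matrix.conjTranspose_apply, star_trivial]
    exact (congrFun (congrFun hBsym i) j).symm
  have hGpd' : G.PosDef := Matrix.PosDef.of_dotProduct_mulVec_pos hGherm fun x hx => by simpa using hGpd x hx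
  set M : Matrix (Fin n) (Fin n) ℝ := G + B * G⁻¹ * B with hM
  have hMpd : M.PosDef := by
    refine hGpd'.add_posSemidef ?_
    have h1 : (Bᴴ * G⁻¹ * B).PosSemidef := hGpd'.inv.posSemidef.conjTranspose_mul_mul_same B
    rwa [hBH] at h1
  have hGdet : IsUnit G.det := hGpd'.det_pos.ne'.isUnit
  have hMdet : IsUnit M.det := hMpd.det_pos.ne'.isUnit
  have hGinv : G⁻¹ * G = 1 := Matrix.nonsing_inv_mul G hGdet
  have hGinv' : G * G⁻¹ = 1 := Matrix.mul_nonsing_inv G hGdet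
  have hMinv : M⁻¹ * M = 1 := Matrix.nonsing_inv_mul M hMdet
  have hMinv' : M * M⁻¹ = 1 := Matrix.mul_nonsing_inv M hMdet
  -- commutation: B * G⁻¹ * M = M * G⁻¹ * B
  have hcomm : B * G⁻¹ * M = M * (G⁻¹ * B) := by
    rw [hM, mul_add, add_mul]
    congr 1
    · rw [mul_assoc B G⁻¹ G, hGinv, mul_one, ← mul_assoc G G⁻¹ B, hGinv', one_mul]
    · simp only [mul_assoc]
  have hcomm' : M⁻¹ * (B * G⁻¹) = G⁻¹ * B * M⁻¹ :=
    calc M⁻¹ * (B * G⁻¹) = M⁻¹ * (B * G⁻¹) * (M * M⁻¹) := by rw [hMinv', mul_one]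
    _ = M⁻¹ * (B * G⁻¹ * M) * M⁻¹ := by noncomm_ring
    _ = M⁻¹ * (M * (G⁻¹ * B)) * M⁻¹ := by rw [hcomm]
    _ = M⁻¹ * M * (G⁻¹ * B) * M⁻¹ := by noncomm_ring
    _ = G⁻¹ * B * M⁻¹ := by rw [hMinv, one_mul]
  set R : Matrix (Fin n) (Fin n) ℝ := M⁻¹ with hR
  set X : Matrix (Fin n) (Fin n) ℝ := -(M⁻¹ * B * G⁻¹) with hX
  -- real identities
  have hid1 : G * R - B * X = 1 := by
    rw [hX, hR, mul_neg, sub_neg_eq_add]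
    have h2 : B * (M⁻¹ * B * G⁻¹) = B * G⁻¹ * B * M⁻¹ := by
      rw [mul_assoc M⁻¹ B G⁻¹, hcomm']
      noncomm_ring
    rw [h2, ← add_mul, ← hM, hMinv']
  have hid2 : G * X + B * R = 0 := by
    rw [hX, hR, mul_neg]
    have h3 : G * (M⁻¹ * B * G⁻¹) = B * M⁻¹ := by
      rw [mul_assoc M⁻¹ B G⁻¹, hcomm', ← mul_assoc, ← mul_assoc, hGinv', one_mul]
    rw [h3, neg_add_cancel]
  -- lift to ℂ
  let f : ℝ →+* ℂ := Complex.ofRealHom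
  have hY : Y = G.map f + Complex.I • B.map f := by
    ext i j
    apply Complex.ext <;>
      simp [Matrix.add_apply, Matrix.map_apply, hRe i j, hIm i j, f]
  set Z : Matrix (Fin n) (Fin n) ℂ := R.map f + Complex.I • X.map f with hZ
  have hYZ : Y * Z = 1 := by
    rw [hY, hZ]
    have expand : (G.map f + Complex.I • B.map f) * (R.map f + Complex.I • X.map f)
        = ((G * R - B * X).map f) + Complex.I • ((G * X + B * R).map f) := by
      rw [Matrix.map_sub _ (map_sub f), Matrix.map_add _ (map_add f), Matrix.map_mul,
        Matrix.map_mul, Matrix.map_mul, Matrix.map_mul]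
      simp only [add_mul, mul_add, smul_mul_assoc, mul_smul_comm, smul_smul,
        Complex.I_mul_I, neg_one_smul, smul_add]
      abel
    rw [expand, hid1, hid2, Matrix.map_zero _ (map_zero f), smul_zero, add_zero,
      Matrix.map_one _ (map_zero f) (map_one f)]
  have hYinv : Y⁻¹ = Z := Matrix.inv_eq_right_inv hYZ
  rw [hYinv, hZ]
  ext i j
  simp [Matrix.map_apply, Matrix.add_apply, hX, f]
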